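/- (Exact form of Proposition 2: autocovariance of the interpolation process.) On a probability space, suppose x₀ (ℝ^n-valued) and the noise sequences (η_s)_{s≥1} (ℝ^n-valued) and (ε_s)_{s≥1} (ℝ^m-valued) are all square-integrable, with x₀, η₁, η₂, …, ε₁, ε₂, … mutually independent, E[ε_s] = 0 for all s, and x̂₀ ∈ ℝ^n deterministic. Let x_t, y_t, x̂_t, e_t, ζ_t be defined by the (possibly misspecified) model and filter recursions, and assume all these random vectors are square-integrable. Then for every h ≥ 1 and t > h, writing D = C(θ₀) − C(θ), Cov(ζ_t, ζ_{t−h}) = C(θ) Cov(e_t, e_{t−h}) C(θ)ᵀ + C(θ) Cov(e_t, x_{t−h}) Dᵀ + C(θ) Cov(e_t, ε_{t−h}) σ(θ₀)ᵀ + D Cov(x_t, e_{t−h}) C(θ)ᵀ + D Cov(x_t, x_{t−h}) Dᵀ. -/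

import Mathlib

open Matrix MeasureTheory ProbabilityTheory

/-- The `a × b` covariance matrix `Cov(X, Y) = E[(X − E X)(Y − E Y)ᵀ]` of two
square-integrable random vectors. -/
noncomputable def covMatrix {Ω : Type*} [MeasureSpace Ω] {a b : ℕ}
    (X : Ω → Fin a → ℝ) (Y : Ω → Fin b → ℝ) : Matrix (Fin a) (Fin b) ℝ :=
  Matrix.of fun i j => ∫ ω, (X ω i - ∫ ω', X ω' i) * (Y ω j - ∫ ω', Y ω' j)

section Aux

variable {Ω : Type*} [MeasureSpace Ω] [IsProbabilityMeasure (ℙ : Measure Ω)]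

lemma memLp_proj {a : ℕ} {X : Ω → Fin a → ℝ} (hX : MemLp X 2 ℙ) (i : Fin a) :
    MemLp (fun ω => X ω i) 2 ℙ := by
  have := (ContinuousLinearMap.proj (R := ℝ) (φ := fun _ : Fin a => ℝ) i).comp_memLp' hX
  exact this

lemma integrable_proj {a : ℕ} {X : Ω → Fin a → ℝ} (hX : MemLp X 2 ℙ) (i : Fin a) :
    Integrable (fun ω => X ω i) ℙ :=
  (memLp_proj hX i).integrable one_le_two

lemma integrable_mul_of_L2 {f g : Ω → ℝ} (hf : MemLp f 2 ℙ) (hg : MemLp g 2 ℙ) :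
    Integrable (fun ω => f ω * g ω) ℙ := by
  have h := hg.smul (φ := f) hf (r := 1)
  have h2 : MemLp (fun ω => f ω * g ω) 1 ℙ := by
    exact h
  exact h2.integrable le_rfl

lemma memLp_centered {a : ℕ} {X : Ω → Fin a → ℝ} (hX : MemLp X 2 ℙ) (i : Fin a) :
    MemLp (fun ω => X ω i - ∫ ω', X ω' i) 2 ℙ :=
  (memLp_proj hX i).sub (memLp_const _)

lemma integral_centered {a : ℕ} {X : Ω → Fin a → ℝ} (hX : MemLp X 2 ℙ) (i : Fin a) :
    (∫ ω, (X ω i - ∫ ω', X ω' i)) = 0 := by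
  rw [integral_sub (integrable_proj hX i) (integrable_const _)]
  simp

lemma memLp_mulVec {a c : ℕ} (M : Matrix (Fin a) (Fin c) ℝ) {X : Ω → Fin c → ℝ}
    (hX : MemLp X 2 ℙ) : MemLp (fun ω => M *ᵥ X ω) 2 ℙ := by
  have := (LinearMap.toContinuousLinearMap M.mulVecLin).comp_memLp' hX
  exact this

lemma covMatrix_transpose {a b : ℕ} (X : Ω → Fin a → ℝ) (Y : Ω → Fin b → ℝ) :
    covMatrix X Y = (covMatrix Y X)ᵀ := by
  ext i j
  simp only [covMatrix, Matrix.of_apply, Matrix.transpose_apply]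
  simp_rw [mul_comm]

lemma covMatrix_const_add_left {a b : ℕ} (c : Fin a → ℝ) {X : Ω → Fin a → ℝ}
    (hX : MemLp X 2 ℙ) (Y : Ω → Fin b → ℝ) :
    covMatrix (fun ω => c + X ω) Y = covMatrix X Y := by
  ext i j
  simp only [covMatrix, Matrix.of_apply, Pi.add_apply]
  have h1 : (∫ ω', (c i + X ω' i)) = c i + ∫ ω', X ω' i := by
    rw [integral_add (integrable_const _) (integrable_proj hX i)]
    simp
  rw [h1]
  have h2 : ∀ ω : Ω, c i + X ω i - (c i + ∫ ω', X ω' i) = X ω i - ∫ ω', X ω' i :=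
    fun ω => by ring
  simp_rw [h2]

lemma covMatrix_add_left {a b : ℕ} {X X' : Ω → Fin a → ℝ} {Y : Ω → Fin b → ℝ}
    (hX : MemLp X 2 ℙ) (hX' : MemLp X' 2 ℙ) (hY : MemLp Y 2 ℙ) :
    covMatrix (fun ω => X ω + X' ω) Y = covMatrix X Y + covMatrix X' Y := by
  ext i j
  simp only [covMatrix, Matrix.of_apply, Pi.add_apply, Matrix.add_apply]
  have h1 : (∫ ω', (X ω' i + X' ω' i)) = (∫ ω', X ω' i) + ∫ ω', X' ω' i :=
    integral_add (integrable_proj hX i) (integrable_proj hX' i)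
  rw [h1]
  have h2 : ∀ ω : Ω,
      (X ω i + X' ω i - ((∫ ω', X ω' i) + ∫ ω', X' ω' i)) * (Y ω j - ∫ ω', Y ω' j)
      = (X ω i - ∫ ω', X ω' i) * (Y ω j - ∫ ω', Y ω' j)
        + (X' ω i - ∫ ω', X' ω' i) * (Y ω j - ∫ ω', Y ω' j) := fun ω => by ring
  simp_rw [h2]
  exact integral_add (integrable_mul_of_L2 (memLp_centered hX i) (memLp_centered hY j))
    (integrable_mul_of_L2 (memLp_centered hX' i) (memLp_centered hY j))

lemma covMatrix_mulVec_left {a b c : ℕ} (M : Matrix (Fin a) (Fin c) ℝ)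
    {X : Ω → Fin c → ℝ} {Y : Ω → Fin b → ℝ}
    (hX : MemLp X 2 ℙ) (hY : MemLp Y 2 ℙ) :
    covMatrix (fun ω => M *ᵥ X ω) Y = M * covMatrix X Y := by
  ext i j
  simp only [covMatrix, Matrix.of_apply, Matrix.mul_apply, Matrix.mulVec, dotProduct]
  have h1 : (∫ ω', ∑ k, M i k * X ω' k) = ∑ k, M i k * ∫ ω', X ω' k := by
    rw [integral_finset_sum _ fun k _ => (integrable_proj hX k).const_mul _]
    simp_rw [integral_const_mul]
  rw [h1]
  have h2 : ∀ ω : Ω,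
      ((∑ k, M i k * X ω k) - ∑ k, M i k * ∫ ω', X ω' k) * (Y ω j - ∫ ω', Y ω' j)
      = ∑ k, M i k * ((X ω k - ∫ ω', X ω' k) * (Y ω j - ∫ ω', Y ω' j)) := by
    intro ω
    rw [← Finset.sum_sub_distrib, Finset.sum_mul]
    congr 1 with k
    ring
  simp_rw [h2]
  rw [integral_finset_sum _ fun k _ =>
    (integrable_mul_of_L2 (memLp_centered hX k) (memLp_centered hY j)).const_mul _]
  simp_rw [integral_const_mul]

lemma covMatrix_const_add_right {a b : ℕ} (c : Fin b → ℝ) {Y : Ω → Fin b → ℝ}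
    (hY : MemLp Y 2 ℙ) (X : Ω → Fin a → ℝ) :
    covMatrix X (fun ω => c + Y ω) = covMatrix X Y := by
  rw [covMatrix_transpose X, covMatrix_const_add_left c hY, ← covMatrix_transpose]

lemma covMatrix_add_right {a b : ℕ} {X : Ω → Fin a → ℝ} {Y Y' : Ω → Fin b → ℝ}
    (hX : MemLp X 2 ℙ) (hY : MemLp Y 2 ℙ) (hY' : MemLp Y' 2 ℙ) :
    covMatrix X (fun ω => Y ω + Y' ω) = covMatrix X Y + covMatrix X Y' := by
  rw [covMatrix_transpose X, covMatrix_add_left hY hY' hX, Matrix.transpose_add,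
    ← covMatrix_transpose, ← covMatrix_transpose]

lemma covMatrix_mulVec_right {a b c : ℕ} (N : Matrix (Fin b) (Fin c) ℝ)
    {X : Ω → Fin a → ℝ} {Y : Ω → Fin c → ℝ}
    (hX : MemLp X 2 ℙ) (hY : MemLp Y 2 ℙ) :
    covMatrix X (fun ω => N *ᵥ Y ω) = covMatrix X Y * Nᵀ := by
  rw [covMatrix_transpose X, covMatrix_mulVec_left N hY hX, Matrix.transpose_mul,
    ← covMatrix_transpose]

end Aux

section Aux2

variable {Ω : Type*} [MeasureSpace Ω] [IsProbabilityMeasure (ℙ : Measure Ω)]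

lemma covMatrix_triple {a b a₁ a₂ a₃ b₁ b₂ b₃ : ℕ}
    (c : Fin a → ℝ) (M₁ : Matrix (Fin a) (Fin a₁) ℝ) (M₂ : Matrix (Fin a) (Fin a₂) ℝ)
    (M₃ : Matrix (Fin a) (Fin a₃) ℝ)
    {X₁ : Ω → Fin a₁ → ℝ} {X₂ : Ω → Fin a₂ → ℝ} {X₃ : Ω → Fin a₃ → ℝ}
    (hX₁ : MemLp X₁ 2 ℙ) (hX₂ : MemLp X₂ 2 ℙ) (hX₃ : MemLp X₃ 2 ℙ)
    (c' : Fin b → ℝ) (N₁ : Matrix (Fin b) (Fin b₁) ℝ) (N₂ : Matrix (Fin b) (Fin b₂) ℝ)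
    (N₃ : Matrix (Fin b) (Fin b₃) ℝ)
    {Y₁ : Ω → Fin b₁ → ℝ} {Y₂ : Ω → Fin b₂ → ℝ} {Y₃ : Ω → Fin b₃ → ℝ}
    (hY₁ : MemLp Y₁ 2 ℙ) (hY₂ : MemLp Y₂ 2 ℙ) (hY₃ : MemLp Y₃ 2 ℙ) :
    covMatrix (fun ω => c + M₁ *ᵥ X₁ ω + M₂ *ᵥ X₂ ω + M₃ *ᵥ X₃ ω)
      (fun ω => c' + N₁ *ᵥ Y₁ ω + N₂ *ᵥ Y₂ ω + N₃ *ᵥ Y₃ ω)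
    = M₁ * covMatrix X₁ Y₁ * N₁ᵀ + M₁ * covMatrix X₁ Y₂ * N₂ᵀ + M₁ * covMatrix X₁ Y₃ * N₃ᵀ
      + M₂ * covMatrix X₂ Y₁ * N₁ᵀ + M₂ * covMatrix X₂ Y₂ * N₂ᵀ + M₂ * covMatrix X₂ Y₃ * N₃ᵀ
      + M₃ * covMatrix X₃ Y₁ * N₁ᵀ + M₃ * covMatrix X₃ Y₂ * N₂ᵀ + M₃ * covMatrix X₃ Y₃ * N₃ᵀ := by
  have hM₁ := memLp_mulVec M₁ hX₁
  have hM₂ := memLp_mulVec M₂ hX₂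
  have hM₃ := memLp_mulVec M₃ hX₃
  have hN₁ := memLp_mulVec N₁ hY₁
  have hN₂ := memLp_mulVec N₂ hY₂
  have hN₃ := memLp_mulVec N₃ hY₃
  have hcM₁ : MemLp (fun ω : Ω => c + M₁ *ᵥ X₁ ω) 2 ℙ := (memLp_const c).add hM₁
  have hcM₁M₂ : MemLp (fun ω : Ω => c + M₁ *ᵥ X₁ ω + M₂ *ᵥ X₂ ω) 2 ℙ := hcM₁.add hM₂
  have hcN₁ : MemLp (fun ω : Ω => c' + N₁ *ᵥ Y₁ ω) 2 ℙ := (memLp_const c').add hN₁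
  have hcN₁N₂ : MemLp (fun ω : Ω => c' + N₁ *ᵥ Y₁ ω + N₂ *ᵥ Y₂ ω) 2 ℙ := hcN₁.add hN₂
  have hZ : MemLp (fun ω : Ω => c' + N₁ *ᵥ Y₁ ω + N₂ *ᵥ Y₂ ω + N₃ *ᵥ Y₃ ω) 2 ℙ :=
    hcN₁N₂.add hN₃
  -- expand the left argument
  have e1 : covMatrix (fun ω => c + M₁ *ᵥ X₁ ω + M₂ *ᵥ X₂ ω + M₃ *ᵥ X₃ ω)
        (fun ω => c' + N₁ *ᵥ Y₁ ω + N₂ *ᵥ Y₂ ω + N₃ *ᵥ Y₃ ω)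
      = covMatrix (fun ω => c + M₁ *ᵥ X₁ ω + M₂ *ᵥ X₂ ω)
          (fun ω => c' + N₁ *ᵥ Y₁ ω + N₂ *ᵥ Y₂ ω + N₃ *ᵥ Y₃ ω)
        + covMatrix (fun ω => M₃ *ᵥ X₃ ω)
          (fun ω => c' + N₁ *ᵥ Y₁ ω + N₂ *ᵥ Y₂ ω + N₃ *ᵥ Y₃ ω) :=
    covMatrix_add_left hcM₁M₂ hM₃ hZ
  have e2 : covMatrix (fun ω => c + M₁ *ᵥ X₁ ω + M₂ *ᵥ X₂ ω)
        (fun ω => c' + N₁ *ᵥ Y₁ ω + N₂ *ᵥ Y₂ ω + N₃ *ᵥ Y₃ ω)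
      = covMatrix (fun ω => c + M₁ *ᵥ X₁ ω)
          (fun ω => c' + N₁ *ᵥ Y₁ ω + N₂ *ᵥ Y₂ ω + N₃ *ᵥ Y₃ ω)
        + covMatrix (fun ω => M₂ *ᵥ X₂ ω)
          (fun ω => c' + N₁ *ᵥ Y₁ ω + N₂ *ᵥ Y₂ ω + N₃ *ᵥ Y₃ ω) :=
    covMatrix_add_left hcM₁ hM₂ hZ
  have e3 : covMatrix (fun ω => c + M₁ *ᵥ X₁ ω)
        (fun ω => c' + N₁ *ᵥ Y₁ ω + N₂ *ᵥ Y₂ ω + N₃ *ᵥ Y₃ ω)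
      = covMatrix (fun ω => M₁ *ᵥ X₁ ω)
          (fun ω => c' + N₁ *ᵥ Y₁ ω + N₂ *ᵥ Y₂ ω + N₃ *ᵥ Y₃ ω) :=
    covMatrix_const_add_left c hM₁ _
  -- expand the right argument against a single mulVec on the left
  have hR : ∀ (k : ℕ) (M : Matrix (Fin a) (Fin k) ℝ) (X : Ω → Fin k → ℝ), MemLp X 2 ℙ →
      covMatrix (fun ω => M *ᵥ X ω) (fun ω => c' + N₁ *ᵥ Y₁ ω + N₂ *ᵥ Y₂ ω + N₃ *ᵥ Y₃ ω)
      = M * covMatrix X Y₁ * N₁ᵀ + M * covMatrix X Y₂ * N₂ᵀ + M * covMatrix X Y₃ * N₃ᵀ := by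
    intro k M X hX
    have hMX := memLp_mulVec M hX
    have r1 : covMatrix (fun ω => M *ᵥ X ω)
          (fun ω => c' + N₁ *ᵥ Y₁ ω + N₂ *ᵥ Y₂ ω + N₃ *ᵥ Y₃ ω)
        = covMatrix (fun ω => M *ᵥ X ω) (fun ω => c' + N₁ *ᵥ Y₁ ω + N₂ *ᵥ Y₂ ω)
          + covMatrix (fun ω => M *ᵥ X ω) (fun ω => N₃ *ᵥ Y₃ ω) :=
      covMatrix_add_right hMX hcN₁N₂ hN₃
    have r2 : covMatrix (fun ω => M *ᵥ X ω) (fun ω => c' + N₁ *ᵥ Y₁ ω + N₂ *ᵥ Y₂ ω)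
        = covMatrix (fun ω => M *ᵥ X ω) (fun ω => c' + N₁ *ᵥ Y₁ ω)
          + covMatrix (fun ω => M *ᵥ X ω) (fun ω => N₂ *ᵥ Y₂ ω) :=
      covMatrix_add_right hMX hcN₁ hN₂
    have r3 : covMatrix (fun ω => M *ᵥ X ω) (fun ω => c' + N₁ *ᵥ Y₁ ω)
        = covMatrix (fun ω => M *ᵥ X ω) (fun ω => N₁ *ᵥ Y₁ ω) :=
      covMatrix_const_add_right c' hN₁ _
    have r4 : ∀ (l : ℕ) (N : Matrix (Fin b) (Fin l) ℝ) (Y : Ω → Fin l → ℝ), MemLp Y 2 ℙ →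
        covMatrix (fun ω => M *ᵥ X ω) (fun ω => N *ᵥ Y ω) = M * covMatrix X Y * Nᵀ := by
      intro l N Y hY
      rw [covMatrix_mulVec_right N hMX hY, covMatrix_mulVec_left M hX hY, Matrix.mul_assoc]
    rw [r1, r2, r3, r4 _ N₁ Y₁ hY₁, r4 _ N₂ Y₂ hY₂, r4 _ N₃ Y₃ hY₃]
  rw [e1, e2, e3, hR _ M₁ X₁ hX₁, hR _ M₂ X₂ hX₂, hR _ M₃ X₃ hX₃]
  abel

lemma covMatrix_zero_of_indepFun {a b : ℕ} {X : Ω → Fin a → ℝ} {Y : Ω → Fin b → ℝ}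
    (h : IndepFun X Y ℙ) (hX : MemLp X 2 ℙ) (hY : MemLp Y 2 ℙ) :
    covMatrix X Y = 0 := by
  ext i j
  simp only [covMatrix, Matrix.of_apply, Matrix.zero_apply]
  have hind : IndepFun (fun ω => X ω i - ∫ ω', X ω' i) (fun ω => Y ω j - ∫ ω', Y ω' j) ℙ :=
    h.comp (φ := fun v : Fin a → ℝ => v i - ∫ ω', X ω' i)
      (ψ := fun v : Fin b → ℝ => v j - ∫ ω', Y ω' j)
      ((measurable_pi_apply i).sub measurable_const)
      ((measurable_pi_apply j).sub measurable_const)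
  have := hind.integral_fun_mul_eq_mul_integral (memLp_centered hX i).aestronglyMeasurable
    (memLp_centered hY j).aestronglyMeasurable
  calc (∫ ω, (X ω i - ∫ ω', X ω' i) * (Y ω j - ∫ ω', Y ω' j))
      = (∫ ω, (X ω i - ∫ ω', X ω' i)) * ∫ ω, (Y ω j - ∫ ω', Y ω' j) := this
    _ = 0 := by rw [integral_centered hX i, integral_centered hY j, mul_zero]

end Aux2

section Aux3

variable {Ω : Type*} [MeasureSpace Ω]

lemma iIndepFun_of_ae_eq {ι : Type*} {β : ι → Type*} {m : ∀ i, MeasurableSpace (β i)}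
    {f g : ∀ i, Ω → β i} (hf : iIndepFun (m := m) f ℙ) (hfg : ∀ i, f i =ᵐ[ℙ] g i) :
    iIndepFun (m := m) g ℙ := by
  rw [iIndepFun_iff_measure_inter_preimage_eq_mul] at hf ⊢
  intro S sets hmeas
  have hset : ∀ i : ι, (g i ⁻¹' sets i : Set Ω) =ᵐ[ℙ] (f i ⁻¹' sets i : Set Ω) := by
    intro i
    rw [Filter.eventuallyEq_set]
    filter_upwards [hfg i] with ω hω
    simp [Set.mem_preimage, hω]
  have hkey : (⋂ i ∈ S, g i ⁻¹' sets i : Set Ω) =ᵐ[ℙ] (⋂ i ∈ S, f i ⁻¹' sets i : Set Ω) := by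
    rw [Filter.eventuallyEq_set]
    have : ∀ᵐ ω ∂ℙ, ∀ i ∈ S, f i ω = g i ω :=
      (ae_ball_iff S.countable_toSet).2 fun i _ => hfg i
    filter_upwards [this] with ω hω
    simp only [Set.mem_iInter, Set.mem_preimage]
    constructor
    · intro h' i hi; rw [hω i hi]; exact h' i hi
    · intro h' i hi; rw [← hω i hi]; exact h' i hi
  rw [measure_congr hkey, hf S hmeas]
  exact Finset.prod_congr rfl fun i _ => (measure_congr (hset i)).symm

lemma measurable_mulVec' {α : Type*} {mα : MeasurableSpace α} {r c : ℕ}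
    (M : Matrix (Fin r) (Fin c) ℝ) {g : α → Fin c → ℝ} (hg : Measurable g) :
    Measurable fun v => M *ᵥ g v := by
  apply measurable_pi_lambda
  intro i
  simp only [Matrix.mulVec, dotProduct]
  exact Finset.measurable_sum _ fun j _ => (measurable_const.mul ((measurable_pi_apply j).comp hg))

lemma indepFun_of_measurable_of_indep {m₁ m₂ : MeasurableSpace Ω} {a b : ℕ}
    {X : Ω → Fin a → ℝ} {Y : Ω → Fin b → ℝ}
    (h : Indep m₁ m₂ ℙ) (hX : Measurable[m₁] X) (hY : Measurable[m₂] Y) :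
    IndepFun X Y ℙ := by
  rw [IndepFun_iff_Indep]
  exact indep_of_indep_of_le_right
    (indep_of_indep_of_le_left h (measurable_iff_comap_le.mp hX))
    (measurable_iff_comap_le.mp hY)

lemma measurable_funadd {α : Type*} {mα : MeasurableSpace α} {k : ℕ} {f g : α → Fin k → ℝ}
    (hf : Measurable f) (hg : Measurable g) : Measurable fun a => f a + g a := by
  apply measurable_pi_lambda
  intro i
  exact ((measurable_pi_apply i).comp hf).add ((measurable_pi_apply i).comp hg)

lemma measurable_funsub {α : Type*} {mα : MeasurableSpace α} {k : ℕ} {f g : α → Fin k → ℝ}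
    (hf : Measurable f) (hg : Measurable g) : Measurable fun a => f a - g a := by
  apply measurable_pi_lambda
  intro i
  exact ((measurable_pi_apply i).comp hf).sub ((measurable_pi_apply i).comp hg)

noncomputable def seqRec {α : Type*} (z : α) (F : ℕ → α → α) : ℕ → α
  | 0 => z
  | k + 1 => F k (seqRec z F k)

end Aux3


/-- exact form of Proposition 2: autocovariance of the interpolation
process of the misspecified Kalman filter. With `D = C(θ₀) − C(θ)`, for `h ≥ 1`, `t > h`:
`Cov(ζ_t, ζ_{t−h}) = C(θ)Cov(e_t,e_{t−h})C(θ)ᵀ + C(θ)Cov(e_t,x_{t−h})Dᵀ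
 + C(θ)Cov(e_t,ε_{t−h})σ(θ₀)ᵀ + D Cov(x_t,e_{t−h})C(θ)ᵀ + D Cov(x_t,x_{t−h})Dᵀ`. -/
theorem interpolation_autocovariance {Ω : Type*} [MeasureSpace Ω]
    [IsProbabilityMeasure (ℙ : Measure Ω)] {p n m : ℕ}
    (u : ℕ → (Fin p → ℝ) → (Fin n → ℝ)) (d : ℕ → (Fin p → ℝ) → (Fin m → ℝ))
    (A β : (Fin p → ℝ) → Matrix (Fin n) (Fin n) ℝ)
    (C : (Fin p → ℝ) → Matrix (Fin m) (Fin n) ℝ)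
    (σ : (Fin p → ℝ) → Matrix (Fin m) (Fin m) ℝ)
    (θ₀ θ : Fin p → ℝ)
    (K : ℕ → Matrix (Fin n) (Fin m) ℝ)
    -- noises and initial state
    (x₀ : Ω → Fin n → ℝ) (η : ℕ → Ω → Fin n → ℝ) (εv : ℕ → Ω → Fin m → ℝ)
    (xhat₀ : Fin n → ℝ)
    (hx₀L2 : MemLp x₀ 2 ℙ)
    (hηL2 : ∀ s : ℕ, 1 ≤ s → MemLp (η s) 2 ℙ)
    (hεL2 : ∀ s : ℕ, 1 ≤ s → MemLp (εv s) 2 ℙ)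
    (hεmean : ∀ s : ℕ, 1 ≤ s → ∀ i, (∫ ω, εv s ω i) = 0)
    -- x₀, η₁, η₂, …, ε₁, ε₂, … are mutually independent
    (hindep : iIndepFun
      (β := fun i : ℕ ⊕ ℕ => Sum.elim (fun _ => Fin n → ℝ) (fun _ => Fin m → ℝ) i)
      (m := fun i => Sum.rec (fun _ => (inferInstance : MeasurableSpace (Fin n → ℝ)))
        (fun _ => (inferInstance : MeasurableSpace (Fin m → ℝ))) i)
      (fun i => Sum.rec (fun l => if l = 0 then x₀ else η l) (fun l => εv (l + 1)) i) ℙ)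
    -- model and filter trajectories
    (x xhat xhatm e : ℕ → Ω → Fin n → ℝ) (y ζ : ℕ → Ω → Fin m → ℝ)
    (hx0 : x 0 = x₀) (hxhat0 : ∀ ω, xhat 0 ω = xhat₀)
    (hx : ∀ t : ℕ, ∀ ω, x (t + 1) ω = u (t + 1) θ₀ + A θ₀ *ᵥ x t ω + β θ₀ *ᵥ η (t + 1) ω)
    (hy : ∀ t : ℕ, ∀ ω, y (t + 1) ω = d (t + 1) θ₀ + C θ₀ *ᵥ x (t + 1) ω + σ θ₀ *ᵥ εv (t + 1) ω)
    (hxhatm : ∀ t : ℕ, ∀ ω, xhatm (t + 1) ω = u (t + 1) θ + A θ *ᵥ xhat t ω)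
    (hxhat : ∀ t : ℕ, ∀ ω, xhat (t + 1) ω =
      (1 - K (t + 1) * C θ) *ᵥ xhatm (t + 1) ω + K (t + 1) *ᵥ (y (t + 1) ω - d (t + 1) θ))
    (he : ∀ t : ℕ, ∀ ω, e t ω = x t ω - xhat t ω)
    (hζ : ∀ t : ℕ, ∀ ω, ζ t ω = y t ω - (d t θ + C θ *ᵥ xhat t ω))
    -- all these random vectors are square-integrable
    (hxL2 : ∀ t : ℕ, MemLp (x t) 2 ℙ)
    (heL2 : ∀ t : ℕ, MemLp (e t) 2 ℙ)
    (hζL2 : ∀ t : ℕ, 1 ≤ t → MemLp (ζ t) 2 ℙ) :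
    ∀ h : ℕ, 1 ≤ h → ∀ t : ℕ, h < t →
      covMatrix (ζ t) (ζ (t - h)) =
        C θ * covMatrix (e t) (e (t - h)) * (C θ)ᵀ
        + C θ * covMatrix (e t) (x (t - h)) * (C θ₀ - C θ)ᵀ
        + C θ * covMatrix (e t) (εv (t - h)) * (σ θ₀)ᵀ
        + (C θ₀ - C θ) * covMatrix (x t) (e (t - h)) * (C θ)ᵀ
        + (C θ₀ - C θ) * covMatrix (x t) (x (t - h)) * (C θ₀ - C θ)ᵀ := by
  classical
  intro h hh t hht
  set N := t - h with hNdef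
  have hN1 : 1 ≤ N := by omega
  have ht1 : 1 ≤ t := by omega
  have hNt : N ≤ t - 1 := by omega
  -- measurable modifications of the noise
  set X0' : Ω → Fin n → ℝ := hx₀L2.aestronglyMeasurable.mk x₀ with hX0'def
  set E' : ℕ → Ω → Fin n → ℝ :=
    fun l => if hl : 1 ≤ l then ((hηL2 l hl).aestronglyMeasurable).mk (η l) else 0 with hE'def
  set Eps' : ℕ → Ω → Fin m → ℝ :=
    fun s => if hs : 1 ≤ s then ((hεL2 s hs).aestronglyMeasurable).mk (εv s) else 0 with hEps'def
  have hX0'meas : Measurable X0' := hx₀L2.aestronglyMeasurable.stronglyMeasurable_mk.measurable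
  have hE'meas : ∀ l, Measurable (E' l) := by
    intro l
    simp only [hE'def]
    split_ifs with hl
    · exact (hηL2 l hl).aestronglyMeasurable.stronglyMeasurable_mk.measurable
    · exact measurable_const
  have hEps'meas : ∀ s, Measurable (Eps' s) := by
    intro s
    simp only [hEps'def]
    split_ifs with hs
    · exact (hεL2 s hs).aestronglyMeasurable.stronglyMeasurable_mk.measurable
    · exact measurable_const
  have hX0'ae : x₀ =ᵐ[ℙ] X0' := hx₀L2.aestronglyMeasurable.ae_eq_mk
  have hE'ae : ∀ l, 1 ≤ l → η l =ᵐ[ℙ] E' l := by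
    intro l hl
    simp only [hE'def, dif_pos hl]
    exact (hηL2 l hl).aestronglyMeasurable.ae_eq_mk
  have hEps'ae : ∀ s, 1 ≤ s → εv s =ᵐ[ℙ] Eps' s := by
    intro s hs
    simp only [hEps'def, dif_pos hs]
    exact (hεL2 s hs).aestronglyMeasurable.ae_eq_mk
  -- the measurable-space family
  set msum : ∀ i : ℕ ⊕ ℕ, MeasurableSpace (Sum.elim (fun _ : ℕ => Fin n → ℝ) (fun _ : ℕ => Fin m → ℝ) i) :=
    fun i => Sum.rec
      (motive := fun i => MeasurableSpace (Sum.elim (fun _ : ℕ => Fin n → ℝ) (fun _ : ℕ => Fin m → ℝ) i))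
      (fun _ => (inferInstance : MeasurableSpace (Fin n → ℝ)))
      (fun _ => (inferInstance : MeasurableSpace (Fin m → ℝ))) i with hmsum
  -- the measurable modification of the independent family
  set f' : ∀ i : ℕ ⊕ ℕ, Ω → Sum.elim (fun _ : ℕ => Fin n → ℝ) (fun _ : ℕ => Fin m → ℝ) i :=
    fun i => Sum.rec (fun l => if l = 0 then X0' else E' l) (fun l => Eps' (l + 1)) i
    with hf'def
  have hindep' : iIndepFun (m := msum) f' ℙ := by
    refine iIndepFun_of_ae_eq hindep ?_
    intro i
    cases i with
    | inl l =>
      show (if l = 0 then x₀ else η l) =ᵐ[ℙ] (if l = 0 then X0' else E' l)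
      by_cases hl : l = 0
      · simpa [hl] using hX0'ae
      · simpa [hl] using hE'ae l (by omega)
    | inr l =>
      show εv (l + 1) =ᵐ[ℙ] Eps' (l + 1)
      exact hEps'ae (l + 1) (by omega)
  have hf'meas : ∀ i : ℕ ⊕ ℕ, @Measurable _ _ _ (msum i) (f' i) := by
    intro i
    cases i with
    | inl l =>
      show Measurable (if l = 0 then X0' else E' l)
      by_cases hl : l = 0
      · simpa [hl] using hX0'meas
      · simpa [hl] using hE'meas l
    | inr l =>
      show Measurable (Eps' (l + 1))
      exact hEps'meas (l + 1)
  -- comap σ-algebras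
  set G : ℕ ⊕ ℕ → MeasurableSpace Ω :=
    fun i => MeasurableSpace.comap (f' i) (msum i) with hGdef
  have hGle : ∀ i, G i ≤ (inferInstance : MeasurableSpace Ω) :=
    fun i => measurable_iff_comap_le.mp (hf'meas i)
  have hiI : iIndep G ℙ := (iIndepFun_iff_iIndep _ f' ℙ).mp hindep'
  have hfG : ∀ i : ℕ ⊕ ℕ, @Measurable _ _ (G i) (msum i) (f' i) :=
    fun i => measurable_iff_comap_le.mpr le_rfl
  -- the sub-σ-algebras generated by sub-families of the noise
  set F1 : MeasurableSpace Ω := ⨆ i ∈ (Set.range Sum.inl : Set (ℕ ⊕ ℕ)), G i with hF1def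
  set F2 : MeasurableSpace Ω :=
    ⨆ i ∈ ((Set.range Sum.inl : Set (ℕ ⊕ ℕ)) ∪ Sum.inr '' {l : ℕ | l < N}), G i with hF2def
  have hmemF1 : ∀ l : ℕ, G (Sum.inl l) ≤ F1 := fun l =>
    le_iSup₂ (f := fun (i : ℕ ⊕ ℕ) (_ : i ∈ (Set.range Sum.inl : Set (ℕ ⊕ ℕ))) => G i)
      (Sum.inl l) ⟨l, rfl⟩
  have hF12 : F1 ≤ F2 := biSup_mono fun i hi => Or.inl hi
  have hmemF2inr : ∀ l : ℕ, l < N → G (Sum.inr l) ≤ F2 := fun l hl =>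
    le_iSup₂ (f := fun (i : ℕ ⊕ ℕ)
      (_ : i ∈ ((Set.range Sum.inl : Set (ℕ ⊕ ℕ)) ∪ Sum.inr '' {l : ℕ | l < N})) => G i)
      (Sum.inr l) (Or.inr ⟨l, hl, rfl⟩)
  -- trajectories driven by the modified noise
  set x' : ℕ → Ω → Fin n → ℝ :=
    seqRec X0' (fun k xk ω => u (k+1) θ₀ + A θ₀ *ᵥ xk ω + β θ₀ *ᵥ E' (k+1) ω) with hx'def
  have hx'succ : ∀ k, x' (k+1)
      = fun ω => u (k+1) θ₀ + A θ₀ *ᵥ x' k ω + β θ₀ *ᵥ E' (k+1) ω := fun k => rfl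
  set xh' : ℕ → Ω → Fin n → ℝ := seqRec (fun _ => xhat₀) (fun k hk ω =>
    (1 - K (k+1) * C θ) *ᵥ (u (k+1) θ + A θ *ᵥ hk ω)
    + K (k+1) *ᵥ (d (k+1) θ₀ + C θ₀ *ᵥ x' (k+1) ω + σ θ₀ *ᵥ Eps' (k+1) ω - d (k+1) θ))
    with hxh'def
  have hxh'succ : ∀ k, xh' (k+1) = fun ω =>
      (1 - K (k+1) * C θ) *ᵥ (u (k+1) θ + A θ *ᵥ xh' k ω)
      + K (k+1) *ᵥ (d (k+1) θ₀ + C θ₀ *ᵥ x' (k+1) ω + σ θ₀ *ᵥ Eps' (k+1) ω - d (k+1) θ) :=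
    fun k => rfl
  -- measurability of the trajectories w.r.t. the sub-σ-algebras
  have hf'inlF1 : ∀ l : ℕ, @Measurable Ω (Fin n → ℝ) F1 _ (f' (Sum.inl l)) := fun l =>
    (hfG (Sum.inl l)).mono (hmemF1 l) le_rfl
  have hX0'F1 : @Measurable Ω (Fin n → ℝ) F1 _ X0' := hf'inlF1 0
  have hE'F1 : ∀ l, 1 ≤ l → @Measurable Ω (Fin n → ℝ) F1 _ (E' l) := by
    intro l hl
    have h2 : f' (Sum.inl l) = E' l := if_neg (by omega)
    rw [← h2]
    exact hf'inlF1 l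
  have hx'F1 : ∀ k, @Measurable Ω (Fin n → ℝ) F1 _ (x' k) := by
    intro k
    induction k with
    | zero => exact hX0'F1
    | succ k ih =>
      rw [hx'succ k]
      apply measurable_funadd (f := fun ω => u (k+1) θ₀ + A θ₀ *ᵥ x' k ω)
        (g := fun ω => β θ₀ *ᵥ E' (k+1) ω)
      · apply measurable_funadd (f := fun _ => u (k+1) θ₀) (g := fun ω => A θ₀ *ᵥ x' k ω)
        · exact measurable_const
        · exact measurable_mulVec' _ ih
      · exact measurable_mulVec' _ (hE'F1 (k+1) (by omega))
  have hx'F2 : ∀ k, @Measurable Ω (Fin n → ℝ) F2 _ (x' k) := fun k => (hx'F1 k).mono hF12 le_rfl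
  have hEps'F2 : ∀ s, 1 ≤ s → s ≤ N → @Measurable Ω (Fin m → ℝ) F2 _ (Eps' s) := by
    intro s hs hsN
    have h2 : f' (Sum.inr (s-1)) = Eps' s := by
      show Eps' (s - 1 + 1) = Eps' s
      exact congrArg Eps' (by omega)
    rw [← h2]
    exact (hfG (Sum.inr (s-1))).mono (hmemF2inr (s-1) (by omega)) le_rfl
  have hxh'F2 : ∀ k, k ≤ N → @Measurable Ω (Fin n → ℝ) F2 _ (xh' k) := by
    intro k
    induction k with
    | zero => intro _; exact measurable_const
    | succ k ih =>
      intro hk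
      rw [hxh'succ k]
      apply measurable_funadd
        (f := fun ω => (1 - K (k+1) * C θ) *ᵥ (u (k+1) θ + A θ *ᵥ xh' k ω))
        (g := fun ω => K (k+1) *ᵥ (d (k+1) θ₀ + C θ₀ *ᵥ x' (k+1) ω + σ θ₀ *ᵥ Eps' (k+1) ω
          - d (k+1) θ))
      · apply measurable_mulVec'
        apply measurable_funadd (f := fun _ => u (k+1) θ) (g := fun ω => A θ *ᵥ xh' k ω)
        · exact measurable_const
        · exact measurable_mulVec' _ (ih (by omega))
      · apply measurable_mulVec'
        apply measurable_funsub
          (f := fun ω => d (k+1) θ₀ + C θ₀ *ᵥ x' (k+1) ω + σ θ₀ *ᵥ Eps' (k+1) ω)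
          (g := fun _ => d (k+1) θ)
        · apply measurable_funadd (f := fun ω => d (k+1) θ₀ + C θ₀ *ᵥ x' (k+1) ω)
            (g := fun ω => σ θ₀ *ᵥ Eps' (k+1) ω)
          · apply measurable_funadd (f := fun _ => d (k+1) θ₀)
              (g := fun ω => C θ₀ *ᵥ x' (k+1) ω)
            · exact measurable_const
            · exact measurable_mulVec' _ (hx'F2 (k+1))
          · exact measurable_mulVec' _ (hEps'F2 (k+1) (by omega) hk)
        · exact measurable_const
  -- the ε-coordinates as comap-measurable maps
  have hGinrt : @Measurable Ω (Fin m → ℝ) (G (Sum.inr (t-1))) _ (Eps' t) := by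
    have h2 : f' (Sum.inr (t-1)) = Eps' t := by
      show Eps' (t - 1 + 1) = Eps' t
      exact congrArg Eps' (by omega)
    rw [← h2]
    exact hfG (Sum.inr (t-1))
  have hGinrN : @Measurable Ω (Fin m → ℝ) (G (Sum.inr (N-1))) _ (Eps' N) := by
    have h2 : f' (Sum.inr (N-1)) = Eps' N := by
      show Eps' (N - 1 + 1) = Eps' N
      exact congrArg Eps' (by omega)
    rw [← h2]
    exact hfG (Sum.inr (N-1))
  -- disjointness
  have hdisj2 : Disjoint ((Set.range Sum.inl : Set (ℕ ⊕ ℕ)) ∪ Sum.inr '' {l : ℕ | l < N})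
      ({Sum.inr (t-1)} : Set (ℕ ⊕ ℕ)) := by
    rw [Set.disjoint_singleton_right]
    intro hmem
    rcases hmem with ⟨l, hl⟩ | ⟨l, hl, hleq⟩
    · exact Sum.inl_ne_inr hl
    · have hl' : l < N := hl
      injection hleq with h2
      omega
  have hdisj1 : Disjoint (Set.range Sum.inl : Set (ℕ ⊕ ℕ)) ({Sum.inr (N-1)} : Set (ℕ ⊕ ℕ)) := by
    rw [Set.disjoint_singleton_right]
    rintro ⟨l, hl⟩
    exact Sum.inl_ne_inr hl
  -- independence of the σ-algebras
  have hIndep2 : Indep F2 (G (Sum.inr (t-1))) ℙ := by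
    have h2 := indep_iSup_of_disjoint hGle hiI hdisj2
    have h3 : (⨆ i ∈ ({Sum.inr (t-1)} : Set (ℕ ⊕ ℕ)), G i) = G (Sum.inr (t-1)) := by simp
    rw [h3] at h2
    exact h2
  have hIndep1 : Indep F1 (G (Sum.inr (N-1))) ℙ := by
    have h2 := indep_iSup_of_disjoint hGle hiI hdisj1
    have h3 : (⨆ i ∈ ({Sum.inr (N-1)} : Set (ℕ ⊕ ℕ)), G i) = G (Sum.inr (N-1)) := by simp
    rw [h3] at h2
    exact h2
  -- independence of the primed random vectors
  have hIFe' : IndepFun (fun ω => x' N ω - xh' N ω) (Eps' t) ℙ :=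
    indepFun_of_measurable_of_indep hIndep2 (measurable_funsub (hx'F2 N) (hxh'F2 N le_rfl)) hGinrt
  have hIFx' : IndepFun (x' N) (Eps' t) ℙ :=
    indepFun_of_measurable_of_indep hIndep2 (hx'F2 N) hGinrt
  have hIFeps' : IndepFun (Eps' N) (Eps' t) ℙ :=
    indepFun_of_measurable_of_indep hIndep2 (hEps'F2 N hN1 le_rfl) hGinrt
  have hIFxt' : IndepFun (x' t) (Eps' N) ℙ :=
    indepFun_of_measurable_of_indep hIndep1 (hx'F1 t) hGinrN
  -- a.e. identification of the trajectories
  have hxae : ∀ k, x k =ᵐ[ℙ] x' k := by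
    intro k
    induction k with
    | zero => rw [hx0]; exact hX0'ae
    | succ k ih =>
      filter_upwards [ih, hE'ae (k+1) (by omega)] with ω h1 h2
      rw [hx k ω, hx'succ k, h1, h2]
  have hxhae : ∀ k, xhat k =ᵐ[ℙ] xh' k := by
    intro k
    induction k with
    | zero => exact Filter.Eventually.of_forall fun ω => by rw [hxhat0 ω]; rfl
    | succ k ih =>
      filter_upwards [ih, hxae (k+1), hEps'ae (k+1) (by omega)] with ω h1 h2 h3
      rw [hxhat k ω, hxhatm k ω, hy k ω, h1, h2, h3, hxh'succ k]
  have heae : e N =ᵐ[ℙ] fun ω => x' N ω - xh' N ω := by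
    filter_upwards [hxae N, hxhae N] with ω h1 h2
    rw [he N ω, h1, h2]
  -- transfer of independence to the original random vectors
  have hIF1 : IndepFun (x t) (εv N) ℙ := hIFxt'.congr (hxae t).symm (hEps'ae N hN1).symm
  have hIF2 : IndepFun (εv t) (x N) ℙ := (hIFx'.congr (hxae N).symm (hEps'ae t ht1).symm).symm
  have hIF3 : IndepFun (εv t) (e N) ℙ := (hIFe'.congr heae.symm (hEps'ae t ht1).symm).symm
  have hIF4 : IndepFun (εv t) (εv N) ℙ :=
    (hIFeps'.congr (hEps'ae N hN1).symm (hEps'ae t ht1).symm).symm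
  -- the four vanishing covariances
  have hz1 : covMatrix (x t) (εv N) = 0 := covMatrix_zero_of_indepFun hIF1 (hxL2 t) (hεL2 N hN1)
  have hz2 : covMatrix (εv t) (e N) = 0 := covMatrix_zero_of_indepFun hIF3 (hεL2 t ht1) (heL2 N)
  have hz3 : covMatrix (εv t) (x N) = 0 := covMatrix_zero_of_indepFun hIF2 (hεL2 t ht1) (hxL2 N)
  have hz4 : covMatrix (εv t) (εv N) = 0 :=
    covMatrix_zero_of_indepFun hIF4 (hεL2 t ht1) (hεL2 N hN1)
  -- the affine representation of the interpolation
  have hζrep : ∀ s, 1 ≤ s → ζ s = fun ω =>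
      (d s θ₀ - d s θ) + C θ *ᵥ e s ω + (C θ₀ - C θ) *ᵥ x s ω + σ θ₀ *ᵥ εv s ω := by
    intro s hs
    obtain ⟨s', rfl⟩ : ∃ s', s = s' + 1 := ⟨s - 1, by omega⟩
    funext ω
    rw [hζ, hy, he]
    simp only [Matrix.sub_mulVec, Matrix.mulVec_sub]
    abel
  -- put everything together
  rw [hζrep t ht1, hζrep N hN1,
    covMatrix_triple (d t θ₀ - d t θ) (C θ) (C θ₀ - C θ) (σ θ₀) (heL2 t) (hxL2 t) (hεL2 t ht1)
      (d N θ₀ - d N θ) (C θ) (C θ₀ - C θ) (σ θ₀) (heL2 N) (hxL2 N) (hεL2 N hN1),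
    hz1, hz2, hz3, hz4]
  simp only [Matrix.mul_zero, Matrix.zero_mul, add_zero, zero_add]
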